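/- With the setup of the exponentially weighted histogram p̂_t^{(γ)} = ((1-γ)/(1-γ^t)) Σ_{s=1}^t γ^{t-s} e_{T_s}, where T_s ~ p_s independently, one has E[‖p̂_t^{(γ)} - p_t‖_1] ≤ ((1-γ)/(1-γ^t)) Σ_{s=1}^t γ^{t-s} ‖p_s - p_t‖_1 + √(N · ((1-γ)/(1+γ)) · ((1+γ^t)/(1-γ^t))). -/

import Mathlib

open Finset MeasureTheory

lemma myL1sqrt {Ω : Type*} [MeasurableSpace Ω] (μ : Measure Ω) [IsProbabilityMeasure μ]
    (Y : Ω → ℝ) (h1 : Integrable Y μ) (h2 : Integrable (fun ω => Y ω ^ 2) μ) :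
    ∫ ω, |Y ω| ∂μ ≤ Real.sqrt (∫ ω, Y ω ^ 2 ∂μ) := by
  have hY2 : 0 ≤ ∫ ω, Y ω ^ 2 ∂μ := integral_nonneg fun ω => sq_nonneg _
  set a := ∫ ω, |Y ω| ∂μ with ha
  have ha0 : 0 ≤ a := integral_nonneg fun ω => abs_nonneg _
  rw [Real.le_sqrt ha0 hY2]
  have habs : Integrable (fun ω => |Y ω|) μ := h1.abs
  have key : 0 ≤ ∫ ω, (|Y ω| - a) ^ 2 ∂μ := integral_nonneg fun ω => sq_nonneg _
  have hcalc : ∫ ω, (|Y ω| - a) ^ 2 ∂μ = (∫ ω, Y ω ^ 2 ∂μ) - a ^ 2 := by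
    have expand : (fun ω => (|Y ω| - a) ^ 2)
        = fun ω => (Y ω ^ 2 - (2 * a) * |Y ω|) + a ^ 2 := by
      funext ω; rw [sub_sq, sq_abs]; ring
    have hint : Integrable (fun ω => Y ω ^ 2 - 2 * a * |Y ω|) μ := by
      exact h2.sub (habs.const_mul (2 * a))
    rw [expand]
    rw [integral_add hint (integrable_const _),
      integral_sub h2 (habs.const_mul _), MeasureTheory.integral_const_mul, integral_const]
    simp [← ha]
    ring
  linarith [hcalc ▸ key]

theorem stmt15 (N t : ℕ) (hN : 1 ≤ N) (ht : 1 ≤ t)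
    (γ : ℝ) (hγ0 : 0 < γ) (hγ1 : γ < 1)
    {Ω : Type*} [MeasurableSpace Ω] (μ : Measure Ω) [IsProbabilityMeasure μ]
    (p : ℕ → ℕ → ℝ)
    (hp0 : ∀ s ∈ Finset.Icc 1 t, ∀ j, 0 ≤ p s j)
    (hp1 : ∀ s ∈ Finset.Icc 1 t, ∑ j ∈ Finset.Icc 1 N, p s j = 1)
    (T : ℕ → Ω → ℕ) (hmeas : ∀ s ∈ Finset.Icc 1 t, Measurable (T s))
    (hrange : ∀ s ∈ Finset.Icc 1 t, ∀ ω, T s ω ∈ Finset.Icc 1 N)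
    (hlaw : ∀ s ∈ Finset.Icc 1 t, ∀ j, μ {ω | T s ω = j} = ENNReal.ofReal (p s j))
    (hindep : ProbabilityTheory.iIndepFun
        (fun s : Fin t => T (s + 1)) μ) :
    ∫ ω, ∑ j ∈ Finset.Icc 1 N,
        |(∑ s ∈ Finset.Icc 1 t, ((1 - γ) * γ ^ (t - s) / (1 - γ ^ t)) *
            (if T s ω = j then (1 : ℝ) else 0)) - p t j| ∂μ
      ≤ ((1 - γ) / (1 - γ ^ t)) * ∑ s ∈ Finset.Icc 1 t, γ ^ (t - s) *
          (∑ j ∈ Finset.Icc 1 N, |p s j - p t j|)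
        + Real.sqrt ((N : ℝ) * ((1 - γ) / (1 + γ)) * ((1 + γ ^ t) / (1 - γ ^ t))) := by
  -- notation
  set w : ℕ → ℝ := fun s => (1 - γ) * γ ^ (t - s) / (1 - γ ^ t) with hw
  have hγt : γ ^ t < 1 := pow_lt_one₀ hγ0.le hγ1 (by omega)
  have h1γt : 0 < 1 - γ ^ t := by linarith
  have hw0 : ∀ s, 0 ≤ w s := fun s =>
    div_nonneg (mul_nonneg (by linarith) (pow_nonneg hγ0.le _)) h1γt.le
  have hγne : γ - 1 ≠ 0 := sub_ne_zero.mpr hγ1.ne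
  have hγne' : (1:ℝ) - γ ≠ 0 := sub_ne_zero.mpr hγ1.ne'
  have hγtne : (1:ℝ) - γ ^ t ≠ 0 := h1γt.ne'
  have hγp : (1:ℝ) + γ ≠ 0 := by positivity
  have hγtp : (1:ℝ) + γ ^ t ≠ 0 := by positivity
  -- reindexing geometric sums
  have hreindex : ∀ f : ℕ → ℝ, ∑ s ∈ Icc 1 t, f (t - s) = ∑ k ∈ range t, f k := by
    intro f
    refine Finset.sum_nbij' (i := fun s => t - s) (j := fun k => t - k) ?_ ?_ ?_ ?_ ?_ <;>
      simp only [Finset.mem_Icc, Finset.mem_range] <;> intro a ha <;> first | omega | trivial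
  have hgeom : ∑ s ∈ Icc 1 t, γ ^ (t - s) = (1 - γ ^ t) / (1 - γ) := by
    rw [hreindex (fun k => γ ^ k), geom_sum_eq hγ1.ne]
    field_simp
    ring
  have hwsum : ∑ s ∈ Icc 1 t, w s = 1 := by
    have : ∀ s, w s = ((1 - γ) / (1 - γ ^ t)) * γ ^ (t - s) := fun s => by rw [hw]; ring
    simp only [this]
    rw [← Finset.mul_sum, hgeom]
    field_simp
  have hgeom2 : ∑ s ∈ Icc 1 t, (γ ^ (t - s)) ^ 2 = (1 - (γ ^ t) ^ 2) / (1 - γ ^ 2) := by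
    have hlt : γ ^ 2 < 1 := by nlinarith
    have h2 := hreindex (fun k => (γ ^ 2) ^ k)
    rw [geom_sum_eq hlt.ne] at h2
    calc ∑ s ∈ Icc 1 t, (γ ^ (t - s)) ^ 2 = ∑ s ∈ Icc 1 t, (γ ^ 2) ^ (t - s) := by
          refine Finset.sum_congr rfl fun s _ => ?_
          rw [← pow_mul, ← pow_mul, Nat.mul_comm]
      _ = ((γ ^ 2) ^ t - 1) / (γ ^ 2 - 1) := h2
      _ = (1 - (γ ^ t) ^ 2) / (1 - γ ^ 2) := by
          rw [← pow_mul, ← pow_mul, Nat.mul_comm]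
          have : γ ^ 2 - 1 ≠ 0 := by nlinarith
          have : (1:ℝ) - γ ^ 2 ≠ 0 := by nlinarith
          field_simp
          ring
  have hwsumsq : ∑ s ∈ Icc 1 t, (w s) ^ 2 = ((1 - γ) / (1 + γ)) * ((1 + γ ^ t) / (1 - γ ^ t)) := by
    have : ∀ s, (w s) ^ 2 = ((1 - γ) / (1 - γ ^ t)) ^ 2 * (γ ^ (t - s)) ^ 2 := fun s => by
      rw [hw]; ring
    simp only [this]
    rw [← Finset.mul_sum, hgeom2]
    rw [show (1:ℝ) - (γ ^ t) ^ 2 = (1 - γ ^ t) * (1 + γ ^ t) by ring,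
      show (1:ℝ) - γ ^ 2 = (1 - γ) * (1 + γ) by ring, div_pow]
    field_simp
  -- indicator machinery
  have hA : ∀ s ∈ Icc 1 t, ∀ j : ℕ, MeasurableSet {ω | T s ω = j} := fun s hs j =>
    hmeas s hs (measurableSet_singleton j)
  have hIdef : ∀ (s j : ℕ), (fun ω => if T s ω = j then (1:ℝ) else 0)
      = Set.indicator {ω | T s ω = j} (fun _ => (1:ℝ)) := by
    intro s j; funext ω
    by_cases h : T s ω = j <;> simp [Set.indicator_apply, h]
  have hI_int : ∀ s ∈ Icc 1 t, ∀ j : ℕ,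
      Integrable (fun ω => if T s ω = j then (1:ℝ) else 0) μ := by
    intro s hs j
    rw [hIdef s j, integrable_indicator_iff (hA s hs j)]
    exact (integrable_const 1).integrableOn
  have hI_integral : ∀ s ∈ Icc 1 t, ∀ j : ℕ,
      ∫ ω, (if T s ω = j then (1:ℝ) else 0) ∂μ = p s j := by
    intro s hs j
    rw [hIdef s j, integral_indicator_const (1:ℝ) (hA s hs j), measureReal_def, hlaw s hs j, smul_eq_mul,
      mul_one, ENNReal.toReal_ofReal (hp0 s hs j)]
  have hIIdef : ∀ (s r j : ℕ),
      (fun ω => (if T s ω = j then (1:ℝ) else 0) * (if T r ω = j then (1:ℝ) else 0))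
      = Set.indicator ({ω | T s ω = j} ∩ {ω | T r ω = j}) (fun _ => (1:ℝ)) := by
    intro s r j; funext ω
    by_cases h1 : T s ω = j <;> by_cases h2 : T r ω = j <;>
      simp [Set.indicator_apply, h1, h2]
  have hII_int : ∀ s ∈ Icc 1 t, ∀ r ∈ Icc 1 t, ∀ j : ℕ,
      Integrable (fun ω => (if T s ω = j then (1:ℝ) else 0) *
        (if T r ω = j then (1:ℝ) else 0)) μ := by
    intro s hs r hr j
    rw [hIIdef s r j, integrable_indicator_iff ((hA s hs j).inter (hA r hr j))]
    exact (integrable_const 1).integrableOn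
  -- pairwise independence
  have hpair : ∀ s ∈ Icc 1 t, ∀ r ∈ Icc 1 t, s ≠ r → ∀ j : ℕ,
      μ ({ω | T s ω = j} ∩ {ω | T r ω = j}) = μ {ω | T s ω = j} * μ {ω | T r ω = j} := by
    intro s hs r hr hsr j
    rw [Finset.mem_Icc] at hs hr
    have hsF : s - 1 < t := by omega
    have hrF : r - 1 < t := by omega
    have hne : (⟨s - 1, hsF⟩ : Fin t) ≠ ⟨r - 1, hrF⟩ := by
      simp only [ne_eq, Fin.mk.injEq]; omega
    have hind := hindep.indepFun hne
    have hs1 : (s - 1) + 1 = s := by omega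
    have hr1 : (r - 1) + 1 = r := by omega
    have hind' : ProbabilityTheory.IndepFun (T s) (T r) μ := by
      simpa only [Fin.val_mk, hs1, hr1] using hind
    have := hind'.measure_inter_preimage_eq_mul {j} {j}
      (measurableSet_singleton j) (measurableSet_singleton j)
    simpa only [Set.preimage, Set.mem_singleton_iff] using this
  have hII_integral : ∀ s ∈ Icc 1 t, ∀ r ∈ Icc 1 t, s ≠ r → ∀ j : ℕ,
      ∫ ω, (if T s ω = j then (1:ℝ) else 0) * (if T r ω = j then (1:ℝ) else 0) ∂μ
        = p s j * p r j := by
    intro s hs r hr hsr j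
    rw [hIIdef s r j, integral_indicator_const (1:ℝ) ((hA s hs j).inter (hA r hr j)), measureReal_def,
      hpair s hs r hr hsr j, hlaw s hs j, hlaw r hr j, smul_eq_mul, mul_one,
      ← ENNReal.ofReal_mul (hp0 s hs j),
      ENNReal.toReal_ofReal (mul_nonneg (hp0 s hs j) (hp0 r hr j))]
  -- centered variables
  set X : ℕ → Ω → ℝ := fun j ω => ∑ s ∈ Icc 1 t, w s * (if T s ω = j then (1:ℝ) else 0) with hX
  set m : ℕ → ℝ := fun j => ∑ s ∈ Icc 1 t, w s * p s j with hm
  have hterm_int : ∀ (j : ℕ), ∀ s ∈ Icc 1 t, ∀ r ∈ Icc 1 t, Integrable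
      (fun ω => ((if T s ω = j then (1:ℝ) else 0) - p s j) *
        ((if T r ω = j then (1:ℝ) else 0) - p r j)) μ := by
    intro j s hs r hr
    have heq : (fun ω => ((if T s ω = j then (1:ℝ) else 0) - p s j) *
        ((if T r ω = j then (1:ℝ) else 0) - p r j))
        = fun ω => (((if T s ω = j then (1:ℝ) else 0) * (if T r ω = j then (1:ℝ) else 0)
          - p r j * (if T s ω = j then (1:ℝ) else 0))
          - p s j * (if T r ω = j then (1:ℝ) else 0)) + p s j * p r j := by
      funext ω; ring
    rw [heq]
    exact (((hII_int s hs r hr j).sub ((hI_int s hs j).const_mul _)).sub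
      ((hI_int r hr j).const_mul _)).add (integrable_const _)
  have hterm_offdiag : ∀ (j : ℕ), ∀ s ∈ Icc 1 t, ∀ r ∈ Icc 1 t, s ≠ r →
      ∫ ω, ((if T s ω = j then (1:ℝ) else 0) - p s j) *
        ((if T r ω = j then (1:ℝ) else 0) - p r j) ∂μ = 0 := by
    intro j s hs r hr hsr
    have heq : (fun ω => ((if T s ω = j then (1:ℝ) else 0) - p s j) *
        ((if T r ω = j then (1:ℝ) else 0) - p r j))
        = fun ω => (((if T s ω = j then (1:ℝ) else 0) * (if T r ω = j then (1:ℝ) else 0)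
          - p r j * (if T s ω = j then (1:ℝ) else 0))
          - p s j * (if T r ω = j then (1:ℝ) else 0)) + p s j * p r j := by
      funext ω; ring
    have hint2 : Integrable (fun ω => (if T s ω = j then (1:ℝ) else 0) *
        (if T r ω = j then (1:ℝ) else 0) - p r j * (if T s ω = j then (1:ℝ) else 0)) μ := by
      exact (hII_int s hs r hr j).sub ((hI_int s hs j).const_mul (p r j))
    have hint1 : Integrable (fun ω => ((if T s ω = j then (1:ℝ) else 0) *
        (if T r ω = j then (1:ℝ) else 0) - p r j * (if T s ω = j then (1:ℝ) else 0))
        - p s j * (if T r ω = j then (1:ℝ) else 0)) μ := by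
      exact hint2.sub ((hI_int r hr j).const_mul (p s j))
    rw [heq, integral_add hint1 (integrable_const _),
      integral_sub hint2 ((hI_int r hr j).const_mul _),
      integral_sub (hII_int s hs r hr j) ((hI_int s hs j).const_mul _),
      MeasureTheory.integral_const_mul, MeasureTheory.integral_const_mul, integral_const,
      hII_integral s hs r hr hsr j, hI_integral s hs j, hI_integral r hr j]
    simp
    ring
  have hterm_diag : ∀ (j : ℕ), ∀ s ∈ Icc 1 t,
      ∫ ω, ((if T s ω = j then (1:ℝ) else 0) - p s j) *
        ((if T s ω = j then (1:ℝ) else 0) - p s j) ∂μ ≤ p s j := by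
    intro j s hs
    have heq : (fun ω => ((if T s ω = j then (1:ℝ) else 0) - p s j) *
        ((if T s ω = j then (1:ℝ) else 0) - p s j))
        = fun ω => (1 - 2 * p s j) * (if T s ω = j then (1:ℝ) else 0) + (p s j) ^ 2 := by
      funext ω; by_cases h : T s ω = j <;> simp [h] <;> ring
    rw [heq, integral_add ((hI_int s hs j).const_mul _) (integrable_const _),
      MeasureTheory.integral_const_mul, integral_const, hI_integral s hs j]
    have := sq_nonneg (p s j)
    simp only [probReal_univ, measure_univ, ENNReal.toReal_one, smul_eq_mul, one_mul]
    nlinarith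
  -- second moment bound
  have hXm_int : ∀ j : ℕ, Integrable (fun ω => X j ω - m j) μ := by
    intro j
    exact (integrable_finset_sum _ (fun s hs => (hI_int s hs j).const_mul (w s))).sub
      (integrable_const _)
  have hsq : ∀ j : ℕ, (fun ω => (X j ω - m j) ^ 2)
      = fun ω => ∑ s ∈ Icc 1 t, ∑ r ∈ Icc 1 t,
          (w s * w r) * (((if T s ω = j then (1:ℝ) else 0) - p s j) *
            ((if T r ω = j then (1:ℝ) else 0) - p r j)) := by
    intro j; funext ω
    have hdiff : X j ω - m j
        = ∑ s ∈ Icc 1 t, w s * ((if T s ω = j then (1:ℝ) else 0) - p s j) := by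
      rw [hX, hm]
      simp only [← Finset.sum_sub_distrib]
      exact Finset.sum_congr rfl fun s _ => by ring
    rw [hdiff, sq, Finset.sum_mul_sum]
    exact Finset.sum_congr rfl fun s _ => Finset.sum_congr rfl fun r _ => by ring
  have hX2_int : ∀ j : ℕ, Integrable (fun ω => (X j ω - m j) ^ 2) μ := by
    intro j
    rw [hsq j]
    exact integrable_finset_sum _ fun s hs => integrable_finset_sum _ fun r hr =>
      (hterm_int j s hs r hr).const_mul _
  have hvar : ∀ j : ℕ, ∫ ω, (X j ω - m j) ^ 2 ∂μ ≤ ∑ s ∈ Icc 1 t, (w s) ^ 2 * p s j := by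
    intro j
    rw [hsq j, integral_finset_sum _ (fun s hs => integrable_finset_sum _ fun r hr =>
      (hterm_int j s hs r hr).const_mul _)]
    refine Finset.sum_le_sum fun s hs => ?_
    rw [integral_finset_sum _ (fun r hr => (hterm_int j s hs r hr).const_mul _)]
    have hsingle : ∑ r ∈ Icc 1 t, ∫ ω, (w s * w r) *
        (((if T s ω = j then (1:ℝ) else 0) - p s j) *
          ((if T r ω = j then (1:ℝ) else 0) - p r j)) ∂μ
        = ∫ ω, (w s * w s) * (((if T s ω = j then (1:ℝ) else 0) - p s j) *
          ((if T s ω = j then (1:ℝ) else 0) - p s j)) ∂μ := by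
      refine Finset.sum_eq_single_of_mem s hs fun r hr hrs => ?_
      rw [MeasureTheory.integral_const_mul, hterm_offdiag j s hs r hr (Ne.symm hrs), mul_zero]
    rw [hsingle, MeasureTheory.integral_const_mul]
    have h1 := hterm_diag j s hs
    have h2 : (0:ℝ) ≤ w s * w s := mul_nonneg (hw0 s) (hw0 s)
    calc w s * w s * ∫ ω, ((if T s ω = j then (1:ℝ) else 0) - p s j) *
          ((if T s ω = j then (1:ℝ) else 0) - p s j) ∂μ
        ≤ w s * w s * p s j := mul_le_mul_of_nonneg_left h1 h2
      _ = (w s) ^ 2 * p s j := by ring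
  have hvarsum : ∑ j ∈ Icc 1 N, ∫ ω, (X j ω - m j) ^ 2 ∂μ ≤ ∑ s ∈ Icc 1 t, (w s) ^ 2 := by
    calc ∑ j ∈ Icc 1 N, ∫ ω, (X j ω - m j) ^ 2 ∂μ
        ≤ ∑ j ∈ Icc 1 N, ∑ s ∈ Icc 1 t, (w s) ^ 2 * p s j :=
          Finset.sum_le_sum fun j _ => hvar j
      _ = ∑ s ∈ Icc 1 t, (w s) ^ 2 * ∑ j ∈ Icc 1 N, p s j := by
          rw [Finset.sum_comm]
          exact Finset.sum_congr rfl fun s _ => by rw [Finset.mul_sum]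
      _ = ∑ s ∈ Icc 1 t, (w s) ^ 2 := by
          exact Finset.sum_congr rfl fun s hs => by rw [hp1 s hs, mul_one]
  -- Cauchy-Schwarz over coordinates
  have hv0 : ∀ j : ℕ, 0 ≤ ∫ ω, (X j ω - m j) ^ 2 ∂μ := fun j =>
    integral_nonneg fun ω => sq_nonneg _
  have hw2 : (0:ℝ) ≤ ∑ s ∈ Icc 1 t, (w s) ^ 2 := Finset.sum_nonneg fun s _ => sq_nonneg _
  have hCS : ∑ j ∈ Icc 1 N, Real.sqrt (∫ ω, (X j ω - m j) ^ 2 ∂μ)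
      ≤ Real.sqrt ((N : ℝ) * ∑ s ∈ Icc 1 t, (w s) ^ 2) := by
    rw [Real.le_sqrt (Finset.sum_nonneg fun j _ => Real.sqrt_nonneg _)
      (mul_nonneg (Nat.cast_nonneg N) hw2)]
    calc (∑ j ∈ Icc 1 N, Real.sqrt (∫ ω, (X j ω - m j) ^ 2 ∂μ)) ^ 2
        ≤ (Icc 1 N).card * ∑ j ∈ Icc 1 N, (Real.sqrt (∫ ω, (X j ω - m j) ^ 2 ∂μ)) ^ 2 :=
          sq_sum_le_card_mul_sum_sq
      _ = (N : ℝ) * ∑ j ∈ Icc 1 N, ∫ ω, (X j ω - m j) ^ 2 ∂μ := by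
          rw [Nat.card_Icc]
          simp only [Nat.add_sub_cancel]
          congr 1
          exact Finset.sum_congr rfl fun j _ => Real.sq_sqrt (hv0 j)
      _ ≤ (N : ℝ) * ∑ s ∈ Icc 1 t, (w s) ^ 2 :=
          mul_le_mul_of_nonneg_left hvarsum (Nat.cast_nonneg N)
  -- bias term
  have hbias : ∑ j ∈ Icc 1 N, |m j - p t j|
      ≤ ∑ s ∈ Icc 1 t, w s * ∑ j ∈ Icc 1 N, |p s j - p t j| := by
    have hmval : ∀ j : ℕ, m j - p t j = ∑ s ∈ Icc 1 t, w s * (p s j - p t j) := by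
      intro j
      rw [hm]
      simp only [mul_sub, Finset.sum_sub_distrib, ← Finset.sum_mul, hwsum, one_mul]
    calc ∑ j ∈ Icc 1 N, |m j - p t j|
        = ∑ j ∈ Icc 1 N, |∑ s ∈ Icc 1 t, w s * (p s j - p t j)| := by
          exact Finset.sum_congr rfl fun j _ => by rw [hmval j]
      _ ≤ ∑ j ∈ Icc 1 N, ∑ s ∈ Icc 1 t, |w s * (p s j - p t j)| :=
          Finset.sum_le_sum fun j _ => Finset.abs_sum_le_sum_abs _ _
      _ = ∑ s ∈ Icc 1 t, w s * ∑ j ∈ Icc 1 N, |p s j - p t j| := by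
          rw [Finset.sum_comm]
          refine Finset.sum_congr rfl fun s _ => ?_
          rw [Finset.mul_sum]
          exact Finset.sum_congr rfl fun j _ => by
            rw [abs_mul, abs_of_nonneg (hw0 s)]
  -- main chain
  have hXabs_int : ∀ j : ℕ, Integrable (fun ω => |X j ω - p t j|) μ := by
    intro j
    exact ((integrable_finset_sum _ (fun s hs => (hI_int s hs j).const_mul (w s))).sub
      (integrable_const _)).abs
  have hXmabs_int : ∀ j : ℕ, Integrable (fun ω => |X j ω - m j|) μ := fun j => (hXm_int j).abs
  have hmain : ∫ ω, ∑ j ∈ Icc 1 N, |X j ω - p t j| ∂μ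
      ≤ ∑ s ∈ Icc 1 t, w s * ∑ j ∈ Icc 1 N, |p s j - p t j|
        + Real.sqrt ((N : ℝ) * ∑ s ∈ Icc 1 t, (w s) ^ 2) := by
    calc ∫ ω, ∑ j ∈ Icc 1 N, |X j ω - p t j| ∂μ
        ≤ ∫ ω, (∑ j ∈ Icc 1 N, |X j ω - m j|) + ∑ j ∈ Icc 1 N, |m j - p t j| ∂μ := by
          refine integral_mono (integrable_finset_sum _ fun j _ => hXabs_int j)
            ((integrable_finset_sum _ fun j _ => hXmabs_int j).add (integrable_const _))
            fun ω => ?_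
          rw [← Finset.sum_add_distrib]
          exact Finset.sum_le_sum fun j _ => abs_sub_le _ _ _
      _ = (∑ j ∈ Icc 1 N, ∫ ω, |X j ω - m j| ∂μ) + ∑ j ∈ Icc 1 N, |m j - p t j| := by
          rw [integral_add (integrable_finset_sum _ fun j _ => hXmabs_int j)
            (integrable_const _), integral_const,
            integral_finset_sum _ fun j _ => hXmabs_int j]
          simp
      _ ≤ (∑ j ∈ Icc 1 N, Real.sqrt (∫ ω, (X j ω - m j) ^ 2 ∂μ))
            + ∑ s ∈ Icc 1 t, w s * ∑ j ∈ Icc 1 N, |p s j - p t j| :=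
          add_le_add (Finset.sum_le_sum fun j _ => myL1sqrt μ _ (hXm_int j) (hX2_int j)) hbias
      _ ≤ Real.sqrt ((N : ℝ) * ∑ s ∈ Icc 1 t, (w s) ^ 2)
            + ∑ s ∈ Icc 1 t, w s * ∑ j ∈ Icc 1 N, |p s j - p t j| :=
          add_le_add hCS le_rfl
      _ = ∑ s ∈ Icc 1 t, w s * ∑ j ∈ Icc 1 N, |p s j - p t j|
            + Real.sqrt ((N : ℝ) * ∑ s ∈ Icc 1 t, (w s) ^ 2) := add_comm _ _
  -- translate to the stated form
  have hbias_eq : ∑ s ∈ Icc 1 t, w s * ∑ j ∈ Icc 1 N, |p s j - p t j|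
      = ((1 - γ) / (1 - γ ^ t)) * ∑ s ∈ Icc 1 t, γ ^ (t - s) *
          (∑ j ∈ Icc 1 N, |p s j - p t j|) := by
    rw [Finset.mul_sum]
    exact Finset.sum_congr rfl fun s _ => by rw [hw]; ring
  have hsqrt_eq : (N : ℝ) * ∑ s ∈ Icc 1 t, (w s) ^ 2
      = (N : ℝ) * ((1 - γ) / (1 + γ)) * ((1 + γ ^ t) / (1 - γ ^ t)) := by
    rw [hwsumsq]; ring
  rw [← hbias_eq, ← hsqrt_eq]
  exact hmain
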